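/- For every integer k ≥ 1, every residue class j modulo N = 2k² + 2k + 1 can be written as j ≡ m·k + n·(k+1) (mod N) for integers m, n with |m| + |n| ≤ k. -/
import Mathlib

theorem stmt_9 (k : ℕ) (hk : 1 ≤ k) (j : ℤ) :
    ∃ m n : ℤ, m.natAbs + n.natAbs ≤ k ∧
      ((2 * k ^ 2 + 2 * k + 1 : ℤ)) ∣ (m * k + n * (k + 1) - j) := by
  have hK : (1 : ℤ) ≤ (k : ℤ) := by exact_mod_cast hk
  set K : ℤ := (k : ℤ) with hKdef
  set Nn : ℕ := 2 * k ^ 2 + 2 * k + 1 with hNn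
  have hNcast : ((Nn : ℤ)) = 2 * K ^ 2 + 2 * K + 1 := by push_cast [hNn]; ring
  have hNpos : (0 : ℤ) < 2 * K ^ 2 + 2 * K + 1 := by nlinarith
  have hNnpos : 0 < Nn := by positivity
  set A : ℤ := Int.bmod j Nn with hAdef
  set B : ℤ := Int.bmod (-j * (2 * K + 1)) Nn with hBdef
  have hA : (2 * K ^ 2 + 2 * K + 1) ∣ (A - j) := hNcast ▸ Int.dvd_bmod_sub_self
  have hB : (2 * K ^ 2 + 2 * K + 1) ∣ (B - (-j * (2 * K + 1))) :=
    hNcast ▸ Int.dvd_bmod_sub_self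
  have hdiv1 : ((Nn : ℤ)) / 2 = K ^ 2 + K := by rw [hNcast]; omega
  have hdiv2 : (((Nn : ℤ)) - 1) / 2 = K ^ 2 + K := by rw [hNcast]; omega
  have hA1 : -(K ^ 2 + K) ≤ A := hdiv1 ▸ Int.le_bmod hNnpos
  have hA2 : A ≤ K ^ 2 + K := hdiv2 ▸ Int.bmod_le hNnpos
  have hB1 : -(K ^ 2 + K) ≤ B := hdiv1 ▸ Int.le_bmod hNnpos
  have hB2 : B ≤ K ^ 2 + K := hdiv2 ▸ Int.bmod_le hNnpos
  obtain ⟨a, ha⟩ := hA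
  obtain ⟨b, hb⟩ := hB
  have hA' : A = j + (2 * K ^ 2 + 2 * K + 1) * a := by linarith
  have hB' : B = -j * (2 * K + 1) + (2 * K ^ 2 + 2 * K + 1) * b := by linarith
  have hX : (2 * K ^ 2 + 2 * K + 1) ∣ (A * K + B * (K + 1)) :=
    ⟨a * K + b * (K + 1) - j, by rw [hA', hB']; ring⟩
  have hY : (2 * K ^ 2 + 2 * K + 1) ∣ (A * (K + 1) - B * K) :=
    ⟨a * (K + 1) - b * K + j, by rw [hA', hB']; ring⟩
  obtain ⟨m, hm⟩ := hX
  obtain ⟨n, hn⟩ := hY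
  refine ⟨m, n, ?_, ?_⟩
  · -- bound: |m| + |n| ≤ k
    have key : 2 * (|A * K + B * (K + 1)| + |A * (K + 1) - B * K|)
        ≤ (2 * (K ^ 2 + K)) * (2 * K + 2) := by
      rcases abs_cases (A * K + B * (K + 1)) with ⟨e1, _⟩ | ⟨e1, _⟩ <;>
        rcases abs_cases (A * (K + 1) - B * K) with ⟨e2, _⟩ | ⟨e2, _⟩ <;>
        rw [e1, e2] <;>
        linarith [mul_le_mul_of_nonneg_right hA2 (by linarith : (0:ℤ) ≤ 2 * K + 1),
          mul_le_mul_of_nonneg_right hB2 (by linarith : (0:ℤ) ≤ 2 * K + 1),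
          mul_le_mul_of_nonneg_right (neg_le_of_neg_le hA1) (by linarith : (0:ℤ) ≤ 2 * K + 1),
          mul_le_mul_of_nonneg_right (neg_le_of_neg_le hB1) (by linarith : (0:ℤ) ≤ 2 * K + 1)]
    rw [hm, hn, abs_mul, abs_mul, abs_of_pos hNpos] at key
    have hmn : |m| + |n| ≤ K := by
      by_contra h
      push_neg at h
      have h' : K + 1 ≤ |m| + |n| := by omega
      have h2 : 2 * (2 * K ^ 2 + 2 * K + 1) * (K + 1)
          ≤ 2 * (2 * K ^ 2 + 2 * K + 1) * (|m| + |n|) :=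
        mul_le_mul_of_nonneg_left h' (by linarith)
      linarith
    have h1 : (m.natAbs : ℤ) = |m| := (Int.abs_eq_natAbs m).symm
    have h2 : (n.natAbs : ℤ) = |n| := (Int.abs_eq_natAbs n).symm
    have : (m.natAbs : ℤ) + (n.natAbs : ℤ) ≤ (k : ℤ) := by rw [h1, h2]; exact hmn
    exact_mod_cast this
  · -- divisibility
    have hAeq : (2 * K ^ 2 + 2 * K + 1) * A
        = (2 * K ^ 2 + 2 * K + 1) * (m * K + n * (K + 1)) := by
      have e : (2 * K ^ 2 + 2 * K + 1) * (m * K + n * (K + 1))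
          = ((2 * K ^ 2 + 2 * K + 1) * m) * K + ((2 * K ^ 2 + 2 * K + 1) * n) * (K + 1) := by
        ring
      rw [e, ← hm, ← hn]; ring
    have hAeq' : A = m * K + n * (K + 1) := mul_left_cancel₀ (ne_of_gt hNpos) hAeq
    have e2 : m * K + n * (K + 1) - j = A - j := by rw [hAeq']
    rw [e2]
    exact ⟨a, ha⟩
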